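/- (Profiling the complier stratum.) Let T be a measurable space, f : S → T measurable, and V := f ∘ X. Under unconfoundedness, positivity, monotonicity, and relevance, for every measurable set T0 ⊆ T: E[(ℓ1(X) − ℓ0(X))·1{V ∈ T0}] = P(A1 > A0 and V ∈ T0), and consequently P(V ∈ T0 | A1 > A0) = E[(ℓ1(X) − ℓ0(X))·1{V ∈ T0}] / E[ℓ1(X) − ℓ0(X)]. The exclusion restriction plays no role in this identity. -/

import Mathlib

open MeasureTheory ProbabilityTheory
open scoped Classical

lemma intOfBdd {Ω : Type*} [MeasurableSpace Ω] {P : Measure Ω} [IsFiniteMeasure P]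
    {h : Ω → ℝ} (hm : Measurable h) {C : ℝ} (hb : ∀ ω, |h ω| ≤ C) : Integrable h P :=
  (integrable_const C).mono' hm.aestronglyMeasurable
    (Filter.Eventually.of_forall (by simpa [Real.norm_eq_abs] using hb))

lemma abs_mul_le {a b A : ℝ} (ha : |a| ≤ 1) (hb : |b| ≤ A) : |a * b| ≤ A := by
  rw [abs_mul]; exact le_trans (mul_le_of_le_one_left (abs_nonneg b) ha) hb

lemma abs_mul3_le {a b c A : ℝ} (ha : |a| ≤ A) (hb : |b| ≤ 1) (hc : |c| ≤ 1) : |a * b * c| ≤ A := by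
  rw [abs_mul, abs_mul]
  nlinarith [abs_nonneg a, abs_nonneg b, abs_nonneg c,
    mul_le_mul ha hb (abs_nonneg b) (le_trans (abs_nonneg a) ha)]

lemma helper_null {Ω S : Type*} [MeasurableSpace Ω] [MeasurableSpace S]
    (P : Measure Ω) [IsProbabilityMeasure P]
    (X : Ω → S) (hX : Measurable X)
    (W : Ω → ℝ) (hW : Measurable W) (hW01 : ∀ ω, W ω = 0 ∨ W ω = 1)
    (B : Ω → ℝ) (hB : Measurable B) (hB01 : ∀ ω, B ω = 0 ∨ B ω = 1)
    (w : S → ℝ) (hw : Measurable w) (ε : ℝ) (hε : 0 < ε) (hwlb : ∀ x, ε ≤ w x) (hwub : ∀ x, w x ≤ 1)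
    (hW_e : ∀ g : S → ℝ, Measurable g → (∃ C, ∀ x, |g x| ≤ C) →
      ∫ ω, W ω * g (X ω) ∂P = ∫ ω, w (X ω) * g (X ω) ∂P)
    (ℓ : S → ℝ) (hℓ : Measurable ℓ)
    (hℓv : ∀ g : S → ℝ, Measurable g → (∃ C, ∀ x, |g x| ≤ C) →
      ∫ ω, B ω * W ω * g (X ω) ∂P = ∫ ω, ℓ (X ω) * W ω * g (X ω) ∂P)
    (D : Set S) (hD : MeasurableSet D) (n : ℝ) (hn : ∀ x ∈ D, |ℓ x| ≤ n)
    (s : ℝ) (hs : ∀ x ∈ D, ∀ b : ℝ, b = 0 ∨ b = 1 → 0 < s * (ℓ x - b)) :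
    ∀ᵐ ω ∂P, X ω ∉ D := by
  set g : S → ℝ := fun x => if x ∈ D then 1 else 0 with hgdef
  have hg : Measurable g := Measurable.ite hD measurable_const measurable_const
  have hgb : ∀ x, |g x| ≤ 1 := by
    intro x; simp only [hgdef]; split <;> norm_num
  have hg01 : ∀ x, 0 ≤ g x := by
    intro x; simp only [hgdef]; split <;> norm_num
  have heq := hℓv g hg ⟨1, hgb⟩
  have hWb : ∀ ω, |W ω| ≤ 1 := by intro ω; rcases hW01 ω with h | h <;> simp [h]
  have hBb : ∀ ω, |B ω| ≤ 1 := by intro ω; rcases hB01 ω with h | h <;> simp [h]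
  have I_B : Integrable (fun ω => B ω * W ω * g (X ω)) P :=
    intOfBdd (by fun_prop) (C := 1) (fun ω => abs_mul3_le (hBb ω) (hWb ω) (hgb (X ω)))
  have I_l : Integrable (fun ω => ℓ (X ω) * W ω * g (X ω)) P := by
    apply intOfBdd (by fun_prop) (C := max n 0)
    intro ω
    by_cases hmem : X ω ∈ D
    · exact le_trans (abs_mul3_le (hn _ hmem) (hWb ω) (hgb (X ω))) (le_max_left _ _)
    · simp only [hgdef, if_neg hmem, mul_zero]; simp
  set h : Ω → ℝ := fun ω => s * (ℓ (X ω) * W ω * g (X ω)) - s * (B ω * W ω * g (X ω)) with hhdef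
  have Ih : Integrable h P := (I_l.const_mul s).sub (I_B.const_mul s)
  have hint : ∫ ω, h ω ∂P = 0 := by
    rw [integral_sub (I_l.const_mul s) (I_B.const_mul s), integral_const_mul, integral_const_mul,
      heq, sub_self]
  have hpos : ∀ ω, 0 ≤ h ω := by
    intro ω
    rcases hW01 ω with h0 | h1
    · simp [hhdef, h0]
    · by_cases hmem : X ω ∈ D
      · have := hs _ hmem (B ω) (hB01 ω)
        simp only [hhdef, hgdef, if_pos hmem, h1, mul_one]
        nlinarith
      · simp [hhdef, hgdef, if_neg hmem]
  have hae : ∀ᵐ ω ∂P, h ω = 0 :=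
    (integral_eq_zero_iff_of_nonneg hpos Ih).mp hint
  have hae2 : ∀ᵐ ω ∂P, ¬ (W ω = 1 ∧ X ω ∈ D) := by
    filter_upwards [hae] with ω h0
    rintro ⟨hw1, hmem⟩
    have := hs _ hmem (B ω) (hB01 ω)
    simp only [hhdef, hgdef, if_pos hmem, hw1, mul_one] at h0
    nlinarith
  have heq2 := hW_e g hg ⟨1, hgb⟩
  have hL0 : ∫ ω, W ω * g (X ω) ∂P = 0 := by
    rw [integral_eq_zero_iff_of_nonneg]
    · filter_upwards [hae2] with ω hne
      rcases hW01 ω with h0 | h1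
      · simp [h0]
      · have hmem : X ω ∉ D := fun hm => hne ⟨h1, hm⟩
        simp [hgdef, if_neg hmem]
    · intro ω
      rcases hW01 ω with h0 | h1
      · simp [h0]
      · simp only [h1, one_mul]; exact hg01 _
    · apply intOfBdd (by fun_prop) (C := 1)
      intro ω
      rw [abs_mul]
      nlinarith [abs_nonneg (W ω), abs_nonneg (g (X ω)), hWb ω, hgb (X ω)]
  have hR0 : ∫ ω, w (X ω) * g (X ω) ∂P = 0 := by rw [← heq2, hL0]
  have Ig : Integrable (fun ω => g (X ω)) P := intOfBdd (hg.comp hX) (fun ω => hgb (X ω))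
  have hwabs : ∀ x, |w x| ≤ 1 := fun x => abs_le.mpr ⟨by linarith [hwlb x], hwub x⟩
  have Iwg : Integrable (fun ω => w (X ω) * g (X ω)) P := by
    apply intOfBdd (by fun_prop) (C := 1)
    intro ω
    rw [abs_mul]
    nlinarith [abs_nonneg (w (X ω)), abs_nonneg (g (X ω)), hwabs (X ω), hgb (X ω)]
  have hgint0 : ∫ ω, g (X ω) ∂P = 0 := by
    have h1 : ε * ∫ ω, g (X ω) ∂P ≤ 0 := by
      rw [← integral_const_mul, ← hR0]
      apply integral_mono (Ig.const_mul ε) Iwg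
      intro ω
      exact mul_le_mul_of_nonneg_right (hwlb (X ω)) (hg01 (X ω))
    have h2 : 0 ≤ ∫ ω, g (X ω) ∂P := integral_nonneg (fun ω => hg01 (X ω))
    nlinarith
  have : ∀ᵐ ω ∂P, g (X ω) = 0 :=
    (integral_eq_zero_iff_of_nonneg (fun ω => hg01 (X ω)) Ig).mp hgint0
  filter_upwards [this] with ω h0 hmem
  rw [hgdef] at h0
  simp only [if_pos hmem] at h0
  exact one_ne_zero h0


lemma transfer {Ω S : Type*} [MeasurableSpace Ω] [MeasurableSpace S]
    (P : Measure Ω) [IsProbabilityMeasure P]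
    (X : Ω → S) (hX : Measurable X)
    (W : Ω → ℝ) (hW : Measurable W) (hW01 : ∀ ω, W ω = 0 ∨ W ω = 1)
    (B : Ω → ℝ) (hB : Measurable B) (hB01 : ∀ ω, B ω = 0 ∨ B ω = 1)
    (w : S → ℝ) (hw : Measurable w) (ε : ℝ) (hε : 0 < ε) (hwlb : ∀ x, ε ≤ w x)
    (hwub : ∀ x, w x ≤ 1)
    (hW_e : ∀ g : S → ℝ, Measurable g → (∃ C, ∀ x, |g x| ≤ C) →
      ∫ ω, W ω * g (X ω) ∂P = ∫ ω, w (X ω) * g (X ω) ∂P)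
    (hWB_e : ∀ g : S → ℝ, Measurable g → (∃ C, ∀ x, |g x| ≤ C) →
      ∫ ω, W ω * B ω * g (X ω) ∂P = ∫ ω, w (X ω) * B ω * g (X ω) ∂P)
    (ℓ : S → ℝ) (hℓ : Measurable ℓ)
    (hℓv : ∀ g : S → ℝ, Measurable g → (∃ C, ∀ x, |g x| ≤ C) →
      ∫ ω, B ω * W ω * g (X ω) ∂P = ∫ ω, ℓ (X ω) * W ω * g (X ω) ∂P) :
    (∀ᵐ ω ∂P, 0 ≤ ℓ (X ω) ∧ ℓ (X ω) ≤ 1) ∧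
    ∀ g₀ : S → ℝ, Measurable g₀ → (∃ C, ∀ x, |g₀ x| ≤ C) →
      ∫ ω, ℓ (X ω) * g₀ (X ω) ∂P = ∫ ω, B ω * g₀ (X ω) ∂P := by
  -- a.e. bounds on ℓ ∘ X
  have hup : ∀ n : ℕ, ∀ᵐ ω ∂P, X ω ∉ {x | 1 < ℓ x ∧ ℓ x ≤ (n:ℝ)} := by
    intro n
    apply helper_null P X hX W hW hW01 B hB hB01 w hw ε hε hwlb hwub hW_e ℓ hℓ hℓv
      _ ((measurableSet_lt measurable_const hℓ).inter (measurableSet_le hℓ measurable_const))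
      (n:ℝ) ?_ 1 ?_
    · rintro x ⟨h1, h2⟩
      simp only [Set.mem_setOf_eq] at h1 h2
      exact abs_le.mpr ⟨by have := Nat.cast_nonneg (α := ℝ) n; linarith, h2⟩
    · rintro x ⟨h1, h2⟩ b hb
      simp only [Set.mem_setOf_eq] at h1 h2
      rcases hb with rfl | rfl <;> nlinarith
  have hdn : ∀ n : ℕ, ∀ᵐ ω ∂P, X ω ∉ {x | ℓ x < 0 ∧ -(n:ℝ) ≤ ℓ x} := by
    intro n
    apply helper_null P X hX W hW hW01 B hB hB01 w hw ε hε hwlb hwub hW_e ℓ hℓ hℓv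
      _ ((measurableSet_lt hℓ measurable_const).inter (measurableSet_le measurable_const hℓ))
      (n:ℝ) ?_ (-1) ?_
    · rintro x ⟨h1, h2⟩
      simp only [Set.mem_setOf_eq] at h1 h2
      exact abs_le.mpr ⟨h2, by have := Nat.cast_nonneg (α := ℝ) n; linarith⟩
    · rintro x ⟨h1, h2⟩ b hb
      simp only [Set.mem_setOf_eq] at h1 h2
      rcases hb with rfl | rfl <;> nlinarith
  have haebd : ∀ᵐ ω ∂P, 0 ≤ ℓ (X ω) ∧ ℓ (X ω) ≤ 1 := by
    have h1 : ∀ᵐ ω ∂P, ∀ n : ℕ, X ω ∉ {x | 1 < ℓ x ∧ ℓ x ≤ (n:ℝ)} := (ae_all_iff).mpr hup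
    have h2 : ∀ᵐ ω ∂P, ∀ n : ℕ, X ω ∉ {x | ℓ x < 0 ∧ -(n:ℝ) ≤ ℓ x} := (ae_all_iff).mpr hdn
    filter_upwards [h1, h2] with ω hu hd
    constructor
    · by_contra hc
      push_neg at hc
      obtain ⟨n, hn⟩ := exists_nat_ge (-(ℓ (X ω)))
      exact hd n ⟨hc, by linarith⟩
    · by_contra hc
      push_neg at hc
      obtain ⟨n, hn⟩ := exists_nat_ge (ℓ (X ω))
      exact hu n ⟨hc, hn⟩
  -- clamped version
  set ℓc : S → ℝ := fun x => max 0 (min (ℓ x) 1) with hℓcdef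
  have hℓc : Measurable ℓc := measurable_const.max (hℓ.min measurable_const)
  have hℓcb : ∀ x, |ℓc x| ≤ 1 := by
    intro x
    rw [abs_le]
    constructor
    · have := le_max_left (0:ℝ) (min (ℓ x) 1); linarith
    · apply max_le (by norm_num) (min_le_right _ _)
  have haecl : ∀ᵐ ω ∂P, ℓ (X ω) = ℓc (X ω) := by
    filter_upwards [haebd] with ω ⟨h0, h1⟩
    simp only [hℓcdef]
    rw [min_eq_left h1, max_eq_right h0]
  -- main chain
  refine ⟨haebd, ?_⟩
  intro g₀ hg₀ ⟨C, hC⟩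
  set C' : ℝ := max C 0 with hC'def
  have hC' : ∀ x, |g₀ x| ≤ C' := fun x => le_trans (hC x) (le_max_left _ _)
  have hwpos : ∀ x, 0 < w x := fun x => lt_of_lt_of_le hε (hwlb x)
  set g : S → ℝ := fun x => g₀ x / w x with hgdef
  have hg : Measurable g := hg₀.div hw
  have hgb : ∀ x, |g x| ≤ C' / ε := by
    intro x
    rw [hgdef]
    simp only
    rw [abs_div, abs_of_pos (hwpos x)]
    exact div_le_div₀ (le_max_right C 0) (hC' x) hε (hwlb x)
  have hcong : ∀ {f f' : Ω → ℝ}, (∀ ω, f ω = f' ω) →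
      ∫ ω, f ω ∂P = ∫ ω, f' ω ∂P := fun h => integral_congr_ae (Filter.Eventually.of_forall h)
  set g1 : S → ℝ := fun x => ℓc x * g x with hg1def
  have hg1 : Measurable g1 := hℓc.mul hg
  have hg1b : ∀ x, |g1 x| ≤ C' / ε := by
    intro x
    rw [hg1def]
    simp only
    rw [abs_mul]
    calc |ℓc x| * |g x| ≤ 1 * (C' / ε) := by
          apply mul_le_mul (hℓcb x) (hgb x) (abs_nonneg _)
          norm_num
      _ = C' / ε := one_mul _
  calc ∫ ω, ℓ (X ω) * g₀ (X ω) ∂P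
      = ∫ ω, ℓc (X ω) * g₀ (X ω) ∂P := by
        apply integral_congr_ae
        filter_upwards [haecl] with ω h
        rw [h]
    _ = ∫ ω, w (X ω) * g1 (X ω) ∂P := by
        apply hcong
        intro ω
        have hne : w (X ω) ≠ 0 := (hwpos (X ω)).ne'
        simp only [hg1def, hgdef]
        field_simp
    _ = ∫ ω, W ω * g1 (X ω) ∂P := (hW_e g1 hg1 ⟨_, hg1b⟩).symm
    _ = ∫ ω, ℓ (X ω) * W ω * g (X ω) ∂P := by
        apply integral_congr_ae
        filter_upwards [haecl] with ω h
        simp only [hg1def]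
        rw [h]
        ring
    _ = ∫ ω, B ω * W ω * g (X ω) ∂P := (hℓv g hg ⟨_, hgb⟩).symm
    _ = ∫ ω, W ω * B ω * g (X ω) ∂P := hcong fun ω => by ring
    _ = ∫ ω, w (X ω) * B ω * g (X ω) ∂P := hWB_e g hg ⟨_, hgb⟩
    _ = ∫ ω, B ω * g₀ (X ω) ∂P := by
        apply hcong
        intro ω
        have hne : w (X ω) ≠ 0 := (hwpos (X ω)).ne'
        simp only [hgdef, div_eq_mul_inv]
        rw [show w (X ω) * B ω * (g₀ (X ω) * (w (X ω))⁻¹)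
            = B ω * g₀ (X ω) * (w (X ω) * (w (X ω))⁻¹) from by ring,
          mul_inv_cancel₀ hne, mul_one]

/-- profiling the complier stratum: under unconfoundedness, positivity,
monotonicity and relevance, for V := f ∘ X and every measurable T0,
E[(ℓ1(X) − ℓ0(X))·1{V ∈ T0}] = P(A1 > A0, V ∈ T0), and
P(V ∈ T0 | A1 > A0) = E[(ℓ1(X) − ℓ0(X))·1{V ∈ T0}] / E[ℓ1(X) − ℓ0(X)]. -/
theorem stmt_13
    {Ω : Type*} [MeasurableSpace Ω] (P : Measure Ω) [IsProbabilityMeasure P]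
    {S : Type*} [mS : MeasurableSpace S]
    {T : Type*} [mT : MeasurableSpace T]
    (X : Ω → S) (hX : Measurable X)
    (f : S → T) (hf : Measurable f)
    (Z A0 A1 : Ω → ℝ)
    (hZ : Measurable Z) (hA0 : Measurable A0) (hA1 : Measurable A1)
    (hZ01 : ∀ ω, Z ω = 0 ∨ Z ω = 1)
    (hA0_01 : ∀ ω, A0 ω = 0 ∨ A0 ω = 1)
    (hA1_01 : ∀ ω, A1 ω = 0 ∨ A1 ω = 1)
    (A : Ω → ℝ) (hA : A = fun ω => (1 - Z ω) * A0 ω + Z ω * A1 ω)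
    (e : S → ℝ) (he : Measurable e) (ε : ℝ) (hε : 0 < ε) (hε2 : ε < 1/2)
    (hebd : ∀ x, ε ≤ e x ∧ e x ≤ 1 - ε)
    (hVe : ∀ g : S → ℝ, Measurable g → (∃ C, ∀ x, |g x| ≤ C) →
      ∫ ω, Z ω * g (X ω) ∂P = ∫ ω, e (X ω) * g (X ω) ∂P)
    -- unconfoundedness: Z ⫫ (A0, A1) | σ(X)
    (hUnconf : ∀ ψ : ℝ × ℝ → ℝ, Measurable ψ → (∃ C, ∀ v, |ψ v| ≤ C) →
      ∀ g : S → ℝ, Measurable g → (∃ C, ∀ x, |g x| ≤ C) →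
      ∫ ω, Z ω * ψ (A0 ω, A1 ω) * g (X ω) ∂P
        = ∫ ω, e (X ω) * ψ (A0 ω, A1 ω) * g (X ω) ∂P)
    (l0 l1 : S → ℝ) (hl0 : Measurable l0) (hl1 : Measurable l1)
    (hl0v : ∀ g : S → ℝ, Measurable g → (∃ C, ∀ x, |g x| ≤ C) →
      ∫ ω, A ω * (if Z ω = 0 then (1:ℝ) else 0) * g (X ω) ∂P
        = ∫ ω, l0 (X ω) * (if Z ω = 0 then (1:ℝ) else 0) * g (X ω) ∂P)
    (hl1v : ∀ g : S → ℝ, Measurable g → (∃ C, ∀ x, |g x| ≤ C) →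
      ∫ ω, A ω * (if Z ω = 1 then (1:ℝ) else 0) * g (X ω) ∂P
        = ∫ ω, l1 (X ω) * (if Z ω = 1 then (1:ℝ) else 0) * g (X ω) ∂P)
    (hMono : P {ω | A0 ω ≤ A1 ω} = 1)
    (hRel : 0 < P {ω | A1 ω ≠ A0 ω}) :
    ∀ T0 : Set T, MeasurableSet T0 →
      (∫ ω, (l1 (X ω) - l0 (X ω)) * (if f (X ω) ∈ T0 then (1:ℝ) else 0) ∂P)
        = (P ({ω | A1 ω = 1 ∧ A0 ω = 0} ∩ {ω | f (X ω) ∈ T0})).toReal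
      ∧ (P ({ω | A1 ω = 1 ∧ A0 ω = 0} ∩ {ω | f (X ω) ∈ T0})).toReal
          / (P {ω | A1 ω = 1 ∧ A0 ω = 0}).toReal
        = (∫ ω, (l1 (X ω) - l0 (X ω)) * (if f (X ω) ∈ T0 then (1:ℝ) else 0) ∂P)
          / (∫ ω, (l1 (X ω) - l0 (X ω)) ∂P) := by
  have hcong : ∀ {u u' : Ω → ℝ}, (∀ ω, u ω = u' ω) →
      ∫ ω, u ω ∂P = ∫ ω, u' ω ∂P := fun h => integral_congr_ae (Filter.Eventually.of_forall h)
  have hZb : ∀ ω, |Z ω| ≤ 1 := by intro ω; rcases hZ01 ω with h | h <;> simp [h]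
  have hA1b : ∀ ω, |A1 ω| ≤ 1 := by intro ω; rcases hA1_01 ω with h | h <;> simp [h]
  have hA0b : ∀ ω, |A0 ω| ≤ 1 := by intro ω; rcases hA0_01 ω with h | h <;> simp [h]
  have heub : ∀ x, e x ≤ 1 := fun x => by have := (hebd x).2; linarith
  -- the Z = 1 side
  have hWB1 : ∀ g : S → ℝ, Measurable g → (∃ C, ∀ x, |g x| ≤ C) →
      ∫ ω, Z ω * A1 ω * g (X ω) ∂P = ∫ ω, e (X ω) * A1 ω * g (X ω) ∂P := by
    intro g hg hgb
    set ψ : ℝ × ℝ → ℝ := fun v => max 0 (min v.2 1) with hψdef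
    have hψm : Measurable ψ := measurable_const.max (measurable_snd.min measurable_const)
    have hψb : ∀ v, |ψ v| ≤ 1 := by
      intro v
      rw [abs_le]
      exact ⟨by have := le_max_left (0:ℝ) (min v.2 1); linarith,
        max_le (by norm_num) (min_le_right _ _)⟩
    have hψA : ∀ ω, ψ (A0 ω, A1 ω) = A1 ω := by
      intro ω; rcases hA1_01 ω with h | h <;> simp [hψdef, h]
    have := hUnconf ψ hψm ⟨1, hψb⟩ g hg hgb
    simpa only [hψA] using this
  have hl1v' : ∀ g : S → ℝ, Measurable g → (∃ C, ∀ x, |g x| ≤ C) →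
      ∫ ω, A1 ω * Z ω * g (X ω) ∂P = ∫ ω, l1 (X ω) * Z ω * g (X ω) ∂P := by
    intro g hg hgb
    have h1 : ∀ ω, A ω * (if Z ω = 1 then (1:ℝ) else 0) = A1 ω * Z ω := by
      intro ω; rcases hZ01 ω with h | h <;> simp [hA, h]
    have h2 : ∀ ω, l1 (X ω) * (if Z ω = 1 then (1:ℝ) else 0) = l1 (X ω) * Z ω := by
      intro ω; rcases hZ01 ω with h | h <;> simp [h]
    have := hl1v g hg hgb
    simpa only [h1, h2] using this
  obtain ⟨hae1, key1⟩ := transfer P X hX Z hZ hZ01 A1 hA1 hA1_01 e he ε hε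
    (fun x => (hebd x).1) heub hVe hWB1 l1 hl1 hl1v'
  -- the Z = 0 side
  have hW0_e : ∀ g : S → ℝ, Measurable g → (∃ C, ∀ x, |g x| ≤ C) →
      ∫ ω, (1 - Z ω) * g (X ω) ∂P = ∫ ω, (1 - e (X ω)) * g (X ω) ∂P := by
    rintro g hg ⟨C, hC⟩
    set C' : ℝ := max C 0 with hC'def
    have hC' : ∀ x, |g x| ≤ C' := fun x => le_trans (hC x) (le_max_left _ _)
    have Ig : Integrable (fun ω => g (X ω)) P := intOfBdd (hg.comp hX) (fun ω => hC' (X ω))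
    have IZg : Integrable (fun ω => Z ω * g (X ω)) P :=
      intOfBdd (by fun_prop) (fun ω => abs_mul_le (hZb ω) (hC' (X ω)))
    have Ieg : Integrable (fun ω => e (X ω) * g (X ω)) P := by
      apply intOfBdd (by fun_prop)
      intro ω
      exact abs_mul_le (abs_le.mpr ⟨by have := (hebd (X ω)).1; linarith, heub (X ω)⟩) (hC' (X ω))
    have h := hVe g hg ⟨C, hC⟩
    rw [hcong (fun ω => (by ring : (1 - Z ω) * g (X ω) = g (X ω) - Z ω * g (X ω))),
      integral_sub Ig IZg, h, ← integral_sub Ig Ieg]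
    exact hcong fun ω => by ring
  have hWB0 : ∀ g : S → ℝ, Measurable g → (∃ C, ∀ x, |g x| ≤ C) →
      ∫ ω, (1 - Z ω) * A0 ω * g (X ω) ∂P = ∫ ω, (1 - e (X ω)) * A0 ω * g (X ω) ∂P := by
    rintro g hg ⟨C, hC⟩
    set C' : ℝ := max C 0 with hC'def
    have hC' : ∀ x, |g x| ≤ C' := fun x => le_trans (hC x) (le_max_left _ _)
    set ψ : ℝ × ℝ → ℝ := fun v => max 0 (min v.1 1) with hψdef
    have hψm : Measurable ψ := measurable_const.max (measurable_fst.min measurable_const)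
    have hψb : ∀ v, |ψ v| ≤ 1 := by
      intro v
      rw [abs_le]
      exact ⟨by have := le_max_left (0:ℝ) (min v.1 1); linarith,
        max_le (by norm_num) (min_le_right _ _)⟩
    have hψA : ∀ ω, ψ (A0 ω, A1 ω) = A0 ω := by
      intro ω; rcases hA0_01 ω with h | h <;> simp [hψdef, h]
    have hu := hUnconf ψ hψm ⟨1, hψb⟩ g hg ⟨C, hC⟩
    simp only [hψA] at hu
    have IA0g : Integrable (fun ω => A0 ω * g (X ω)) P :=
      intOfBdd (by fun_prop) (fun ω => abs_mul_le (hA0b ω) (hC' (X ω)))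
    have IZA0g : Integrable (fun ω => Z ω * A0 ω * g (X ω)) P :=
      intOfBdd (by fun_prop) (fun ω => abs_mul3_le (hC' (X ω)) (hZb ω) (hA0b ω) |>.trans_eq' (by rw [show Z ω * A0 ω * g (X ω) = g (X ω) * Z ω * A0 ω from by ring]))
    have IeA0g : Integrable (fun ω => e (X ω) * A0 ω * g (X ω)) P := by
      apply intOfBdd (by fun_prop)
      intro ω
      rw [show e (X ω) * A0 ω * g (X ω) = g (X ω) * e (X ω) * A0 ω from by ring]
      exact abs_mul3_le (hC' (X ω))
        (abs_le.mpr ⟨by have := (hebd (X ω)).1; linarith, heub (X ω)⟩) (hA0b ω)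
    rw [hcong (fun ω => (by ring :
        (1 - Z ω) * A0 ω * g (X ω) = A0 ω * g (X ω) - Z ω * A0 ω * g (X ω))),
      integral_sub IA0g IZA0g, hu, ← integral_sub IA0g IeA0g]
    exact hcong fun ω => by ring
  have hl0v' : ∀ g : S → ℝ, Measurable g → (∃ C, ∀ x, |g x| ≤ C) →
      ∫ ω, A0 ω * (1 - Z ω) * g (X ω) ∂P = ∫ ω, l0 (X ω) * (1 - Z ω) * g (X ω) ∂P := by
    intro g hg hgb
    have h1 : ∀ ω, A ω * (if Z ω = 0 then (1:ℝ) else 0) = A0 ω * (1 - Z ω) := by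
      intro ω; rcases hZ01 ω with h | h <;> simp [hA, h]
    have h2 : ∀ ω, l0 (X ω) * (if Z ω = 0 then (1:ℝ) else 0) = l0 (X ω) * (1 - Z ω) := by
      intro ω; rcases hZ01 ω with h | h <;> simp [h]
    have := hl0v g hg hgb
    simpa only [h1, h2] using this
  obtain ⟨hae0, key0⟩ := transfer P X hX (fun ω => 1 - Z ω) (measurable_const.sub hZ)
    (fun ω => by rcases hZ01 ω with h | h <;> simp [h]) A0 hA0 hA0_01
    (fun x => 1 - e x) (measurable_const.sub he) ε hε
    (fun x => by have := (hebd x).2; show ε ≤ 1 - e x; linarith)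
    (fun x => by have := (hebd x).1; show 1 - e x ≤ 1; linarith) hW0_e hWB0 l0 hl0 hl0v'
  -- a.e. monotonicity
  have haeMono : ∀ᵐ ω ∂P, A0 ω ≤ A1 ω := by
    have hms : MeasurableSet {ω | A0 ω ≤ A1 ω} := measurableSet_le hA0 hA1
    rw [ae_iff]
    have : {ω | ¬ A0 ω ≤ A1 ω} = {ω | A0 ω ≤ A1 ω}ᶜ := rfl
    rw [this, measure_compl hms (measure_ne_top P _), hMono, measure_univ, tsub_self]
  -- main identity for bounded g₀
  have main : ∀ g₀ : S → ℝ, Measurable g₀ → (∀ x, |g₀ x| ≤ 1) →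
      ∫ ω, (l1 (X ω) - l0 (X ω)) * g₀ (X ω) ∂P
        = ∫ ω, (if A1 ω = 1 ∧ A0 ω = 0 then (1:ℝ) else 0) * g₀ (X ω) ∂P := by
    intro g₀ hg₀ hb
    have I1 : Integrable (fun ω => l1 (X ω) * g₀ (X ω)) P := by
      apply (integrable_const (1:ℝ)).mono'
        (((hl1.comp hX).mul (hg₀.comp hX)).aestronglyMeasurable)
      filter_upwards [hae1] with ω ⟨h0, h1⟩
      simp only [Function.comp_apply, Real.norm_eq_abs]
      exact abs_mul_le (abs_le.mpr ⟨by change -1 ≤ l1 (X ω); linarith, h1⟩) (hb (X ω))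
    have I0 : Integrable (fun ω => l0 (X ω) * g₀ (X ω)) P := by
      apply (integrable_const (1:ℝ)).mono'
        (((hl0.comp hX).mul (hg₀.comp hX)).aestronglyMeasurable)
      filter_upwards [hae0] with ω ⟨h0, h1⟩
      simp only [Function.comp_apply, Real.norm_eq_abs]
      exact abs_mul_le (abs_le.mpr ⟨by change -1 ≤ l0 (X ω); linarith, h1⟩) (hb (X ω))
    have IA1 : Integrable (fun ω => A1 ω * g₀ (X ω)) P :=
      intOfBdd (by fun_prop) (fun ω => abs_mul_le (hA1b ω) (hb (X ω)))
    have IA0 : Integrable (fun ω => A0 ω * g₀ (X ω)) P :=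
      intOfBdd (by fun_prop) (fun ω => abs_mul_le (hA0b ω) (hb (X ω)))
    calc ∫ ω, (l1 (X ω) - l0 (X ω)) * g₀ (X ω) ∂P
        = ∫ ω, (l1 (X ω) * g₀ (X ω) - l0 (X ω) * g₀ (X ω)) ∂P := hcong fun ω => by ring
      _ = ∫ ω, l1 (X ω) * g₀ (X ω) ∂P - ∫ ω, l0 (X ω) * g₀ (X ω) ∂P := integral_sub I1 I0
      _ = ∫ ω, A1 ω * g₀ (X ω) ∂P - ∫ ω, A0 ω * g₀ (X ω) ∂P := by
          rw [key1 g₀ hg₀ ⟨1, hb⟩, key0 g₀ hg₀ ⟨1, hb⟩]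
      _ = ∫ ω, (A1 ω - A0 ω) * g₀ (X ω) ∂P := by
          rw [← integral_sub IA1 IA0]
          exact hcong fun ω => by ring
      _ = ∫ ω, (if A1 ω = 1 ∧ A0 ω = 0 then (1:ℝ) else 0) * g₀ (X ω) ∂P := by
          apply integral_congr_ae
          filter_upwards [haeMono] with ω hm
          rcases hA0_01 ω with h0 | h0 <;> rcases hA1_01 ω with h1 | h1 <;>
            simp [h0, h1] <;> nlinarith [hm]
  -- conclude
  intro T0 hT0
  set E : Set Ω := {ω | A1 ω = 1 ∧ A0 ω = 0} with hEdef
  have hEm : MeasurableSet E :=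
    (hA1 (measurableSet_singleton 1)).inter (hA0 (measurableSet_singleton 0))
  set F : Set Ω := {ω | f (X ω) ∈ T0} with hFdef
  have hFm : MeasurableSet F := (hf.comp hX) hT0
  have eq1 : ∫ ω, (l1 (X ω) - l0 (X ω)) * (if f (X ω) ∈ T0 then (1:ℝ) else 0) ∂P
      = (P (E ∩ F)).toReal := by
    have hg₀ : Measurable (fun x => if f x ∈ T0 then (1:ℝ) else 0) :=
      Measurable.ite (hf hT0) measurable_const measurable_const
    have hb : ∀ x, |if f x ∈ T0 then (1:ℝ) else 0| ≤ 1 := by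
      intro x; split <;> norm_num
    rw [main _ hg₀ hb]
    have : (fun ω => (if A1 ω = 1 ∧ A0 ω = 0 then (1:ℝ) else 0) *
        (if f (X ω) ∈ T0 then (1:ℝ) else 0)) = (E ∩ F).indicator (fun _ => (1:ℝ)) := by
      funext ω
      by_cases h1 : A1 ω = 1 ∧ A0 ω = 0 <;> by_cases h2 : f (X ω) ∈ T0 <;>
        simp [Set.indicator, hEdef, hFdef, Set.mem_inter_iff, Set.mem_setOf_eq, h1, h2]
    rw [this, integral_indicator_const _ (hEm.inter hFm)]
    simp; rfl
  have eq2 : ∫ ω, (l1 (X ω) - l0 (X ω)) ∂P = (P E).toReal := by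
    have h := main (fun _ => 1) measurable_const (fun x => by norm_num)
    simp only [mul_one] at h
    rw [h]
    have : (fun ω => (if A1 ω = 1 ∧ A0 ω = 0 then (1:ℝ) else 0))
        = E.indicator (fun _ => (1:ℝ)) := by
      funext ω
      by_cases h1 : A1 ω = 1 ∧ A0 ω = 0 <;>
        simp [Set.indicator, hEdef, Set.mem_setOf_eq, h1]
    rw [this, integral_indicator_const _ hEm]
    simp; rfl
  exact ⟨eq1, by rw [eq1, eq2]⟩
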